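/- If ρ is a probability distribution on [0,∞) with ρ ∈ L_loc (locally long-tailed), then ρ((x−c, x]) ∼ c·ρ((x−1, x]) as x → ∞ for every c > 0. -/

import Mathlib

open MeasureTheory Filter Set

noncomputable def conv (f g : ℝ → ℝ) (x : ℝ) : ℝ := ∫ u, f (x - u) * g u

def IsDensity (f : ℝ → ℝ) : Prop := (∀ x, 0 ≤ f x) ∧ (∫ x, f x) = 1

def LongTailedFun (f : ℝ → ℝ) : Prop :=
  (∀ᶠ x in atTop, 0 < f x) ∧
  ∀ a : ℝ, Tendsto (fun x => f (x + a) / f x) atTop (nhds 1)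

def LongDensity (f : ℝ → ℝ) : Prop := IsDensity f ∧ LongTailedFun f

def SubexpDensity (f : ℝ → ℝ) : Prop :=
  LongDensity f ∧ Tendsto (fun x => conv f f x / f x) atTop (nhds 2)

noncomputable def mconv (μ ν : Measure ℝ) : Measure ℝ :=
  (μ.prod ν).map (fun p : ℝ × ℝ => p.1 + p.2)

noncomputable def locMass (μ : Measure ℝ) (c x : ℝ) : ℝ := (μ (Ioc x (x + c))).toReal

def MemLDelta (μ : Measure ℝ) (c : ℝ) : Prop :=
  (∀ᶠ x in atTop, 0 < locMass μ c x) ∧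
  ∀ a : ℝ, Tendsto (fun x => locMass μ c (x + a) / locMass μ c x) atTop (nhds 1)

def MemSDelta (μ : Measure ℝ) (c : ℝ) : Prop :=
  MemLDelta μ c ∧
  Tendsto (fun x => locMass (mconv μ μ) c x / locMass μ c x) atTop (nhds 2)

def LLoc (μ : Measure ℝ) : Prop := ∀ c > 0, MemLDelta μ c
def SLoc (μ : Measure ℝ) : Prop := ∀ c > 0, MemSDelta μ c

def LAc (μ : Measure ℝ) : Prop :=
  ∃ g : ℝ → ℝ, LongDensity g ∧ μ = volume.withDensity (fun x => ENNReal.ofReal (g x))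
def SAc (μ : Measure ℝ) : Prop :=
  ∃ g : ℝ → ℝ, SubexpDensity g ∧ μ = volume.withDensity (fun x => ENNReal.ofReal (g x))

section
variable (ρ : Measure ℝ) [IsProbabilityMeasure ρ]

lemma locMass_mono {a b : ℝ} (hab : a ≤ b) (x : ℝ) : locMass ρ a x ≤ locMass ρ b x :=
  ENNReal.toReal_mono (measure_ne_top ρ _)
    (measure_mono (Set.Ioc_subset_Ioc_right (by linarith)))

lemma locMass_add {a b : ℝ} (ha : 0 ≤ a) (hb : 0 ≤ b) (x : ℝ) :
    locMass ρ (a + b) x = locMass ρ a x + locMass ρ b (x + a) := by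
  unfold locMass
  rw [← ENNReal.toReal_add (measure_ne_top ρ _) (measure_ne_top ρ _),
    ← measure_union (Set.Ioc_disjoint_Ioc_of_le le_rfl) measurableSet_Ioc,
    Set.Ioc_union_Ioc_eq_Ioc (by linarith) (by linarith), add_assoc]

lemma locMass_nsmul {c : ℝ} (hc : 0 ≤ c) (n : ℕ) (x : ℝ) :
    locMass ρ (n * c) x = ∑ k ∈ Finset.range n, locMass ρ c (x + k * c) := by
  induction n with
  | zero => simp [locMass]
  | succ n ih =>
      have : ((n : ℝ) + 1) * c = n * c + c := by ring
      rw [Nat.cast_succ, this, locMass_add ρ (by positivity) hc, ih, Finset.sum_range_succ]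

lemma tendsto_locMass_nat (hρ : LLoc ρ) {c : ℝ} (hc : 0 < c) (n : ℕ) :
    Tendsto (fun x => locMass ρ (n * c) x / locMass ρ c x) atTop (nhds n) := by
  have heq : ∀ x, locMass ρ (n * c) x / locMass ρ c x
      = ∑ k ∈ Finset.range n, locMass ρ c (x + k * c) / locMass ρ c x := by
    intro x; rw [locMass_nsmul ρ hc.le, Finset.sum_div]
  simp only [heq]
  have := tendsto_finset_sum (Finset.range n)
    (fun k _ => (hρ c hc).2 ((k : ℝ) * c))
  simpa using this

lemma tendsto_locMass_rat (hρ : LLoc ρ) {r : ℚ} (hr : 0 < r) :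
    Tendsto (fun x => locMass ρ (r : ℝ) x / locMass ρ 1 x) atTop (nhds (r : ℝ)) := by
  set p : ℕ := r.num.toNat with hp
  set q : ℕ := r.den with hq
  have hq0 : 0 < (q : ℝ) := by positivity
  have hrpq : (r : ℝ) = (p : ℝ) / (q : ℝ) := by
    rw [Rat.cast_def]
    congr 1
    exact_mod_cast (Int.toNat_of_nonneg (by positivity)).symm
  set d : ℝ := 1 / q with hd
  have hd0 : 0 < d := by positivity
  have h1 : Tendsto (fun x => locMass ρ ((p : ℝ) * d) x / locMass ρ d x) atTop (nhds p) :=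
    tendsto_locMass_nat ρ hρ hd0 p
  have h2 : Tendsto (fun x => locMass ρ ((q : ℝ) * d) x / locMass ρ d x) atTop (nhds q) :=
    tendsto_locMass_nat ρ hρ hd0 q
  have hqd : (q : ℝ) * d = 1 := by rw [hd]; field_simp
  have hpd : (p : ℝ) * d = (r : ℝ) := by rw [hrpq, hd]; field_simp
  rw [hqd] at h2; rw [hpd] at h1
  have h3 := h1.div h2 (by positivity)
  rw [← hrpq] at h3
  apply h3.congr'
  filter_upwards [(hρ d hd0).1] with x hx
  rcases eq_or_ne (locMass ρ 1 x) 0 with hz | hz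
  · simp [hz]
  · have := hx.ne'
    rw [Pi.div_apply]; field_simp
lemma tendsto_locMass_ratio (hρ : LLoc ρ) {c : ℝ} (hc : 0 < c) :
    Tendsto (fun x => locMass ρ c x / locMass ρ 1 x) atTop (nhds c) := by
  rw [Metric.tendsto_nhds]
  intro ε hε
  obtain ⟨r, hr1, hr2⟩ := exists_rat_btwn (show max (c - ε/2) (c/2) < c by
    simp only [max_lt_iff]; constructor <;> linarith)
  obtain ⟨s, hs1, hs2⟩ := exists_rat_btwn (show c < c + ε/2 by linarith)
  have hrc : c - ε/2 < (r:ℝ) := lt_of_le_of_lt (le_max_left _ _) hr1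
  have hr0' : (0:ℝ) < (r:ℝ) := by
    have : c/2 < (r:ℝ) := lt_of_le_of_lt (le_max_right _ _) hr1
    linarith
  have hr0 : 0 < r := by exact_mod_cast hr0'
  have hs0 : 0 < s := by exact_mod_cast hc.trans hs1
  have hR := Metric.tendsto_nhds.mp (tendsto_locMass_rat ρ hρ hr0) (ε/4) (by linarith)
  have hS := Metric.tendsto_nhds.mp (tendsto_locMass_rat ρ hρ hs0) (ε/4) (by linarith)
  filter_upwards [hR, hS, (hρ 1 one_pos).1] with x hxr hxs h1
  rw [Real.dist_eq, abs_lt] at hxr hxs ⊢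
  have hmr : locMass ρ (r:ℝ) x ≤ locMass ρ c x := locMass_mono ρ hr2.le x
  have hms : locMass ρ c x ≤ locMass ρ (s:ℝ) x := locMass_mono ρ hs1.le x
  have hdr : locMass ρ (r:ℝ) x / locMass ρ 1 x ≤ locMass ρ c x / locMass ρ 1 x :=
    (div_le_div_iff_of_pos_right h1).mpr hmr
  have hds : locMass ρ c x / locMass ρ 1 x ≤ locMass ρ (s:ℝ) x / locMass ρ 1 x :=
    (div_le_div_iff_of_pos_right h1).mpr hms
  constructor <;> linarith [hxr.1, hxr.2, hxs.1, hxs.2]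

end

theorem stmt11 (ρ : Measure ℝ) [IsProbabilityMeasure ρ] (hsupp : ρ (Iio 0) = 0)
    (hρ : LLoc ρ) :
    ∀ c > (0:ℝ), Tendsto
      (fun x => (ρ (Ioc (x - c) x)).toReal / (c * (ρ (Ioc (x - 1) x)).toReal))
      atTop (nhds 1) := by
  intro c hc
  have hA : Tendsto (fun x => locMass ρ c (x - c) / locMass ρ c x) atTop (nhds 1) := by
    have := (hρ c hc).2 (-c)
    simpa [sub_eq_add_neg] using this
  have hB := tendsto_locMass_ratio ρ hρ hc
  have hC : Tendsto (fun x => locMass ρ 1 x / locMass ρ 1 (x - 1)) atTop (nhds 1) := by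
    have h := ((hρ 1 one_pos).2 (-1)).inv₀ one_ne_zero
    have heq : ∀ x : ℝ, (locMass ρ 1 (x + -1) / locMass ρ 1 x)⁻¹
        = locMass ρ 1 x / locMass ρ 1 (x - 1) := by
      intro x; rw [inv_div, sub_eq_add_neg]
    simpa [heq] using h
  have hprod := (hA.mul hB).mul hC
  rw [one_mul, mul_one] at hprod
  have hfin : Tendsto (fun x => (locMass ρ c (x - c) / locMass ρ c x)
      * (locMass ρ c x / locMass ρ 1 x) * (locMass ρ 1 x / locMass ρ 1 (x - 1)) / c)
      atTop (nhds 1) := by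
    have := hprod.div_const c
    simpa [div_self hc.ne'] using this
  apply hfin.congr'
  obtain ⟨N, hN⟩ := eventually_atTop.mp (hρ 1 one_pos).1
  have e3 : ∀ᶠ x in atTop, 0 < locMass ρ 1 (x - 1) :=
    eventually_atTop.mpr ⟨N + 1, fun x hx => hN _ (by linarith)⟩
  filter_upwards [(hρ c hc).1, (hρ 1 one_pos).1, e3] with x h1 h2 h3
  have hx1 : (ρ (Ioc (x - c) x)).toReal = locMass ρ c (x - c) := by
    simp [locMass, sub_add_cancel]
  have hx2 : (ρ (Ioc (x - 1) x)).toReal = locMass ρ 1 (x - 1) := by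
    simp [locMass, sub_add_cancel]
  rw [hx1, hx2]
  field_simp
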